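/- For every T > 0, the Planck function ν ↦ B(ν, T) is integrable on (0, ∞) and ∫₀^∞ B(ν, T) dν = (a_r c / (4π)) T⁴; equivalently 4π ∫₀^∞ B(ν, T) dν = a_r c T⁴, where a_r = 8π⁵k⁴/(15 h³ c³). -/

import Mathlib

open MeasureTheory Real Set

lemma planck_core_hasSum {x : ℝ} (hx : 0 < x) :
    HasSum (fun n : ℕ => x ^ 3 * Real.exp (-(((n : ℝ) + 1) * x)))
      (x ^ 3 * (1 / (Real.exp x - 1))) := by
  set r := Real.exp (-x) with hr
  have hr0 : 0 < r := Real.exp_pos _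
  have hr1 : r < 1 := Real.exp_lt_one_iff.mpr (by linarith)
  have hgeo : HasSum (fun n : ℕ => r ^ n) (1 - r)⁻¹ :=
    hasSum_geometric_of_lt_one hr0.le hr1
  have hx1 : 1 < Real.exp x := by
    have := Real.add_one_lt_exp (ne_of_gt hx)
    linarith
  have h1 : Real.exp x - 1 ≠ 0 := sub_ne_zero.mpr (ne_of_gt hx1)
  have h2 : (1 : ℝ) - r ≠ 0 := by linarith
  have hkey : r * Real.exp x = 1 := by
    rw [hr, ← Real.exp_add, neg_add_cancel, Real.exp_zero]
  have hxv : x ^ 3 * r * (1 - r)⁻¹ = x ^ 3 * (1 / (Real.exp x - 1)) := by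
    field_simp
    linear_combination hkey
  have hS := hgeo.mul_left (x ^ 3 * r)
  rw [hxv] at hS
  have heq : (fun n : ℕ => x ^ 3 * Real.exp (-(((n : ℝ) + 1) * x)))
      = fun n : ℕ => x ^ 3 * r * r ^ n := by
    funext n
    rw [hr, ← Real.exp_nat_mul, mul_assoc, ← Real.exp_add]
    ring_nf
  rw [heq]
  exact hS

theorem planck_core :
    IntegrableOn (fun x : ℝ => x ^ 3 * (1 / (Real.exp x - 1))) (Ioi 0) volume ∧
    (∫ x in Ioi (0 : ℝ), x ^ 3 * (1 / (Real.exp x - 1))) = π ^ 4 / 15 := by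
  set F : ℕ → ℝ → ℝ := fun n x => x ^ 3 * Real.exp (-(((n : ℝ) + 1) * x)) with hF
  -- integrability of each term
  have hFint : ∀ n : ℕ, IntegrableOn (F n) (Ioi 0) volume := by
    intro n
    have hb : (0 : ℝ) < (n : ℝ) + 1 := by positivity
    have h0 := integrableOn_rpow_mul_exp_neg_mul_rpow (p := 1) (s := 3)
      (b := (n : ℝ) + 1) (by norm_num) zero_lt_one hb
    apply h0.congr_fun _ measurableSet_Ioi
    intro x hx
    simp only [hF]
    rw [Real.rpow_one, show ((3 : ℝ)) = ((3 : ℕ) : ℝ) by norm_num,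
      Real.rpow_natCast]
    ring_nf
  -- value of each term integral
  have hFval : ∀ n : ℕ, (∫ x in Ioi (0 : ℝ), F n x) = 6 / ((n : ℝ) + 1) ^ 4 := by
    intro n
    have hb : (0 : ℝ) < (n : ℝ) + 1 := by positivity
    have hG : Real.Gamma 4 = 6 := by
      rw [show (4 : ℝ) = ((3 : ℕ) : ℝ) + 1 by norm_num, Real.Gamma_nat_eq_factorial]
      norm_num [Nat.factorial]
    have h4 := Real.integral_rpow_mul_exp_neg_mul_Ioi (a := 4) (r := (n : ℝ) + 1)
      (by norm_num) hb
    rw [hG] at h4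
    have hcongr : (∫ x in Ioi (0 : ℝ), F n x)
        = ∫ t in Ioi (0 : ℝ), t ^ ((4 : ℝ) - 1) * Real.exp (-(((n : ℝ) + 1) * t)) := by
      refine setIntegral_congr_fun measurableSet_Ioi fun t ht => ?_
      simp only [hF]
      rw [show ((4 : ℝ) - 1) = ((3 : ℕ) : ℝ) by norm_num, Real.rpow_natCast]
    rw [hcongr, h4, show (4 : ℝ) = ((4 : ℕ) : ℝ) by norm_num, Real.rpow_natCast]
    field_simp
  -- the zeta value
  have hZ : HasSum (fun n : ℕ => 6 / ((n : ℝ) + 1) ^ 4) (π ^ 4 / 15) := by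
    have h2 : HasSum (fun n : ℕ => (1 : ℝ) / ((n : ℝ) + 1) ^ 4) (π ^ 4 / 90) := by
      have h3 : HasSum (fun n : ℕ => (1 : ℝ) / ((n + 1 : ℕ) : ℝ) ^ 4) (π ^ 4 / 90) := by
        rw [hasSum_nat_add_iff (f := fun n : ℕ => (1 : ℝ) / (n : ℝ) ^ 4) 1]
        simpa using hasSum_zeta_four
      convert h3 using 2 with n
      push_cast
      ring
    have h6 := h2.mul_left 6
    have h7 : (fun n : ℕ => 6 / ((n : ℝ) + 1) ^ 4)
        = fun n : ℕ => 6 * ((1 : ℝ) / ((n : ℝ) + 1) ^ 4) := by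
      funext n; ring
    rw [h7, show (π ^ 4 / 15 : ℝ) = 6 * (π ^ 4 / 90) by ring]
    exact h6
  -- summability of the integrals of norms
  have hNorm : ∀ n : ℕ, (∫ x in Ioi (0 : ℝ), ‖F n x‖) = 6 / ((n : ℝ) + 1) ^ 4 := by
    intro n
    rw [← hFval n]
    refine setIntegral_congr_fun measurableSet_Ioi fun x hx => ?_
    have hx0 : (0 : ℝ) < x := hx
    simp only [hF, Real.norm_eq_abs]
    exact abs_of_nonneg (by positivity)
  have hSummable : Summable fun n : ℕ => ∫ x in Ioi (0 : ℝ), ‖F n x‖ := by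
    simp_rw [hNorm]
    exact hZ.summable
  have hHS := MeasureTheory.hasSum_integral_of_summable_integral_norm
    (μ := volume.restrict (Ioi (0 : ℝ))) (F := F) hFint hSummable
  have htsum : (∫ x in Ioi (0 : ℝ), ∑' n, F n x)
      = ∫ x in Ioi (0 : ℝ), x ^ 3 * (1 / (Real.exp x - 1)) := by
    refine setIntegral_congr_fun measurableSet_Ioi fun x hx => ?_
    exact (planck_core_hasSum hx).tsum_eq
  rw [htsum] at hHS
  have heqf : (fun n : ℕ => ∫ x, F n x ∂(volume.restrict (Ioi (0 : ℝ))))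
      = fun n : ℕ => 6 / ((n : ℝ) + 1) ^ 4 := funext hFval
  rw [show (∫ x, F · x ∂(volume.restrict (Ioi (0 : ℝ))))
      = fun n : ℕ => ∫ x, F n x ∂(volume.restrict (Ioi (0 : ℝ))) from rfl, heqf] at hHS
  refine ⟨?_, hHS.unique hZ⟩
  -- integrability via domination
  have hg : IntegrableOn (fun x : ℝ => x ^ 2 * Real.exp (-(1 / 2 * x))) (Ioi 0) volume := by
    have h0 := integrableOn_rpow_mul_exp_neg_mul_rpow (p := 1) (s := 2)
      (b := 1 / 2) (by norm_num) zero_lt_one (by norm_num)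
    apply h0.congr_fun _ measurableSet_Ioi
    intro x hx
    show x ^ (2 : ℝ) * Real.exp (-(1 / 2) * x ^ (1 : ℝ)) = x ^ 2 * Real.exp (-(1 / 2 * x))
    rw [Real.rpow_one, show ((2 : ℝ)) = ((2 : ℕ) : ℝ) by norm_num,
      Real.rpow_natCast]
    ring_nf
  refine hg.mono' ?_ ?_
  · apply Measurable.aestronglyMeasurable
    fun_prop
  · rw [ae_restrict_iff' measurableSet_Ioi]
    filter_upwards with x hx
    have hx0 : (0 : ℝ) < x := hx
    have hx1 : 1 < Real.exp x := by
      have := Real.add_one_lt_exp (ne_of_gt hx0)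
      linarith
    have e1 : (0 : ℝ) < Real.exp x - 1 := by linarith
    have hbound : x * Real.exp (x / 2) ≤ Real.exp x - 1 := by
      have hs := Real.self_lt_sinh_iff.mpr (by positivity : (0 : ℝ) < x / 2)
      have hexp : Real.exp x - 1 = 2 * Real.sinh (x / 2) * Real.exp (x / 2) := by
        have hA : Real.exp (x / 2) * Real.exp (x / 2) = Real.exp x := by
          rw [← Real.exp_add]; norm_num
        have hB : Real.exp (-(x / 2)) * Real.exp (x / 2) = 1 := by
          rw [← Real.exp_add]; norm_num
        rw [Real.sinh_eq]
        linear_combination hB - hA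
      rw [hexp]
      have := Real.exp_pos (x / 2)
      nlinarith
    have hprod : Real.exp (-(1 / 2 * x)) * Real.exp (x / 2) = 1 := by
      rw [← Real.exp_add, show -(1 / 2 * x) + x / 2 = 0 by ring, Real.exp_zero]
    rw [Real.norm_eq_abs, abs_of_nonneg (by positivity), mul_one_div,
      div_le_iff₀ e1]
    have hmul := mul_le_mul_of_nonneg_left hbound
      (by positivity : (0 : ℝ) ≤ x ^ 2 * Real.exp (-(1 / 2 * x)))
    have h3 : x ^ 2 * Real.exp (-(1 / 2 * x)) * (x * Real.exp (x / 2)) = x ^ 3 := by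
      rw [show x ^ 2 * Real.exp (-(1 / 2 * x)) * (x * Real.exp (x / 2))
          = x ^ 3 * (Real.exp (-(1 / 2 * x)) * Real.exp (x / 2)) by ring, hprod, mul_one]
    linarith

theorem planck_integral (h k c : ℝ) (hh : 0 < h) (hk : 0 < k) (hc : 0 < c) :
    ∀ T : ℝ, 0 < T →
      IntegrableOn
        (fun ν => 2 * h * ν ^ 3 / c ^ 2 * (1 / (Real.exp (h * ν / (k * T)) - 1)))
        (Set.Ioi (0 : ℝ)) volume ∧
      (∫ ν in Set.Ioi (0 : ℝ),
          2 * h * ν ^ 3 / c ^ 2 * (1 / (Real.exp (h * ν / (k * T)) - 1)))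
        = (8 * π ^ 5 * k ^ 4 / (15 * h ^ 3 * c ^ 3)) * c / (4 * π) * T ^ 4 ∧
      4 * π * (∫ ν in Set.Ioi (0 : ℝ),
          2 * h * ν ^ 3 / c ^ 2 * (1 / (Real.exp (h * ν / (k * T)) - 1)))
        = (8 * π ^ 5 * k ^ 4 / (15 * h ^ 3 * c ^ 3)) * c * T ^ 4 := by
  intro T hT
  have hb : 0 < h / (k * T) := by positivity
  set b := h / (k * T) with hbdef
  have hfun : (fun ν : ℝ => 2 * h * ν ^ 3 / c ^ 2 * (1 / (Real.exp (h * ν / (k * T)) - 1)))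
      = fun ν : ℝ => (2 * h / (c ^ 2 * b ^ 3)) *
          ((b * ν) ^ 3 * (1 / (Real.exp (b * ν) - 1))) := by
    funext ν
    have harg : h * ν / (k * T) = b * ν := by rw [hbdef]; ring
    rw [harg]
    generalize (1 / (Real.exp (b * ν) - 1)) = u
    have hbne : b ≠ 0 := ne_of_gt hb
    field_simp
  have hI : IntegrableOn
      (fun ν : ℝ => 2 * h * ν ^ 3 / c ^ 2 * (1 / (Real.exp (h * ν / (k * T)) - 1)))
      (Set.Ioi (0 : ℝ)) volume := by
    rw [hfun]
    apply Integrable.const_mul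
    have := (integrableOn_Ioi_comp_mul_left_iff
      (fun x : ℝ => x ^ 3 * (1 / (Real.exp x - 1))) 0 hb).mpr
      (by simpa using planck_core.1)
    simpa [IntegrableOn] using this
  have hval : (∫ ν in Set.Ioi (0 : ℝ),
      2 * h * ν ^ 3 / c ^ 2 * (1 / (Real.exp (h * ν / (k * T)) - 1)))
      = (8 * π ^ 5 * k ^ 4 / (15 * h ^ 3 * c ^ 3)) * c / (4 * π) * T ^ 4 := by
    rw [hfun]
    rw [MeasureTheory.integral_const_mul]
    have hc0 := integral_comp_mul_left_Ioi
      (fun x : ℝ => x ^ 3 * (1 / (Real.exp x - 1))) 0 hb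
    simp only [mul_zero] at hc0
    rw [hc0, planck_core.2, smul_eq_mul, hbdef]
    have hπ : (π : ℝ) ≠ 0 := Real.pi_ne_zero
    field_simp
    ring
  refine ⟨hI, hval, ?_⟩
  rw [hval]
  have hπ : (π : ℝ) ≠ 0 := Real.pi_ne_zero
  field_simp
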